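/- arXiv:2307.09111 — 3 statements merged into one kernel-verified Lean document; each statement's English description precedes it below -/
import Mathlib

section
/- For any tree T with threshold assignment τ (1≤τ(u)≤d(u) for all u), the minimum size of a timed target set is at least 2|A|, where A is the set of non-leaf nodes v with τ(v) strictly greater than the number of non-leaf neighbors of v. -/
open Finset
open scoped Classical

variable {V : Type*}

noncomputable def Qseq (G : SimpleGraph V) [Fintype V] (τ : V → ℕ) (S : ℕ → Finset V) :
    ℕ → Finset V
  | 0 => ∅
  | i + 1 => Finset.univ.filter fun v =>
      τ v ≤ (G.neighborFinset v ∩ (S i ∪ Qseq G τ S i)).card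

def IsTTS (G : SimpleGraph V) [Fintype V] (τ : V → ℕ) (S : ℕ → Finset V) (k : ℕ) : Prop :=
  S k = ∅ ∧ Qseq G τ S k = Finset.univ

def ttsSize (S : ℕ → Finset V) (k : ℕ) : ℕ := ∑ i ∈ Finset.range (k + 1), (S i).card

noncomputable def strictMaj (G : SimpleGraph V) [Fintype V] (v : V) : ℕ := (G.degree v + 2) / 2

noncomputable def npStep (G : SimpleGraph V) [Fintype V] (τ : V → ℕ) (A : Finset V) : Finset V :=
  Finset.univ.filter fun v => τ v ≤ (G.neighborFinset v ∩ A).card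

def IsTS (G : SimpleGraph V) [Fintype V] (τ : V → ℕ) (S : Finset V) : Prop :=
  ∃ i : ℕ, (npStep G τ)^[i] S = Finset.univ

noncomputable def MTT (G : SimpleGraph V) [Fintype V] (τ : V → ℕ) : ℕ :=
  sInf {m | ∃ (S : ℕ → Finset V) (k : ℕ), IsTTS G τ S k ∧ ttsSize S k = m}

/-- The set of leaf neighbors of `v` (neighbors of degree 1). -/
noncomputable def leafNbrs (T : SimpleGraph V) [Fintype V] (v : V) : Finset V :=
  (T.neighborFinset v).filter fun u => T.degree u = 1

/-- `l̄(v)`: the number of non-leaf neighbors of `v` (neighbors of degree `> 1`). -/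
noncomputable def lbar (T : SimpleGraph V) [Fintype V] (v : V) : ℕ :=
  ((T.neighborFinset v).filter fun u => 1 < T.degree u).card

/-- The class `A` of non-leaf nodes `v` with `τ(v) > l̄(v)`. -/
noncomputable def Aset (T : SimpleGraph V) [Fintype V] (τ : V → ℕ) : Finset V :=
  Finset.univ.filter fun v => 1 < T.degree v ∧ lbar T v < τ v

/-- The class `A''` of non-leaf nodes `v` with `τ(v) > l̄(v)` and `τ(v) = d(v)`. -/
noncomputable def Aset'' (T : SimpleGraph V) [Fintype V] (τ : V → ℕ) : Finset V :=
  Finset.univ.filter fun v => 1 < T.degree v ∧ lbar T v < τ v ∧ τ v = T.degree v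

/-- The class `C` of non-leaf nodes `v` with `τ(v) = l̄(v)`. -/
noncomputable def Cset (T : SimpleGraph V) [Fintype V] (τ : V → ℕ) : Finset V :=
  Finset.univ.filter fun v => 1 < T.degree v ∧ τ v = lbar T v

/-! ### Auxiliary lemmas for `stmt13` -/

/-- The block of `v`: `v` together with its leaf neighbors. -/
noncomputable def Bset (T : SimpleGraph V) [Fintype V] (v : V) : Finset V :=
  insert v (leafNbrs T v)

section StmtAux
variable [Fintype V] {T : SimpleGraph V} {τ : V → ℕ} {S : ℕ → Finset V}

lemma mem_Qseq_succ {w : V} {i : ℕ} :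
    w ∈ Qseq T τ S (i + 1) ↔ τ w ≤ (T.neighborFinset w ∩ (S i ∪ Qseq T τ S i)).card := by
  simp [Qseq]

lemma leaf_nbhd {u v : V} (hu : u ∈ leafNbrs T v) : T.neighborFinset u = {v} := by
  rcases Finset.mem_filter.mp hu with ⟨hmem, hdeg⟩
  have hadj : T.Adj v u := (SimpleGraph.mem_neighborFinset T v u).mp hmem
  have hv : v ∈ T.neighborFinset u := (SimpleGraph.mem_neighborFinset T u v).mpr hadj.symm
  have hc : (T.neighborFinset u).card = 1 := hdeg
  obtain ⟨a, ha⟩ := Finset.card_eq_one.mp hc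
  rw [ha] at hv ⊢
  rw [Finset.mem_singleton.mp hv]

lemma leaf_act (hτ1 : ∀ u, 1 ≤ τ u) {u v : V} (hu : u ∈ leafNbrs T v) {i : ℕ}
    (h : u ∈ Qseq T τ S (i + 1)) : v ∈ S i ∪ Qseq T τ S i := by
  have h' := mem_Qseq_succ.mp h
  rw [leaf_nbhd hu] at h'
  by_contra hv
  have h1 := hτ1 u
  rw [Finset.singleton_inter_of_notMem hv, Finset.card_empty] at h'
  omega

lemma adj_nbr_deg_pos {u v : V} (h : u ∈ T.neighborFinset v) : 1 ≤ T.degree u := by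
  have hadj : T.Adj v u := (SimpleGraph.mem_neighborFinset T v u).mp h
  have : v ∈ T.neighborFinset u := (SimpleGraph.mem_neighborFinset T u v).mpr hadj.symm
  exact Finset.card_pos.mpr ⟨v, this⟩

lemma v_act {v : V} (hv : v ∈ Aset T τ) {i : ℕ} (h : v ∈ Qseq T τ S (i + 1)) :
    ∃ u ∈ leafNbrs T v, u ∈ S i ∪ Qseq T τ S i := by
  rcases Finset.mem_filter.mp hv with ⟨-, hdeg, hlt⟩
  have h' := mem_Qseq_succ.mp h
  by_contra hno
  push_neg at hno
  have hsub : T.neighborFinset v ∩ (S i ∪ Qseq T τ S i) ⊆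
      (T.neighborFinset v).filter fun u => 1 < T.degree u := by
    intro x hx
    rcases Finset.mem_inter.mp hx with ⟨hxN, hxX⟩
    refine Finset.mem_filter.mpr ⟨hxN, ?_⟩
    rcases lt_or_eq_of_le (adj_nbr_deg_pos hxN) with h1 | h1
    · exact h1
    · exact absurd hxX (hno x (Finset.mem_filter.mpr ⟨hxN, h1.symm⟩))
  have := Finset.card_le_card hsub
  have : (T.neighborFinset v ∩ (S i ∪ Qseq T τ S i)).card ≤ lbar T v := this
  omega

lemma two_idx {f : ℕ → ℕ} {j1 j2 n : ℕ} (h12 : j1 < j2) (h2n : j2 < n)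
    (hf1 : 1 ≤ f j1) (hf2 : 1 ≤ f j2) : 2 ≤ ∑ j ∈ Finset.range n, f j := by
  have hsub : ({j1, j2} : Finset ℕ) ⊆ Finset.range n := by
    intro x hx
    rcases Finset.mem_insert.mp hx with rfl | hx
    · exact Finset.mem_range.mpr (h12.trans h2n)
    · rw [Finset.mem_singleton.mp hx]; exact Finset.mem_range.mpr h2n
  calc 2 ≤ f j1 + f j2 := by omega
    _ = ∑ j ∈ ({j1, j2} : Finset ℕ), f j := (Finset.sum_pair h12.ne).symm
    _ ≤ ∑ j ∈ Finset.range n, f j := Finset.sum_le_sum_of_subset hsub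

lemma seed_exists (hτ1 : ∀ u, 1 ≤ τ u) {v : V} (hv : v ∈ Aset T τ) :
    ∀ i, v ∈ Qseq T τ S i → ∃ j < i, (S j ∩ Bset T v).Nonempty := by
  intro i
  induction i using Nat.strong_induction_on with
  | _ i ih =>
    match i with
    | 0 => intro h; simp [Qseq] at h
    | i + 1 =>
      intro h
      obtain ⟨u, hu, huX⟩ := v_act hv h
      rcases Finset.mem_union.mp huX with hus | huq
      · exact ⟨i, Nat.lt_succ_self i, u, Finset.mem_inter.mpr ⟨hus,
          Finset.mem_insert_of_mem hu⟩⟩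
      · match i with
        | 0 => simp [Qseq] at huq
        | m + 1 =>
          have hvX := leaf_act hτ1 hu huq
          rcases Finset.mem_union.mp hvX with hvs | hvq
          · exact ⟨m, by omega, v, Finset.mem_inter.mpr ⟨hvs, Finset.mem_insert_self _ _⟩⟩
          · obtain ⟨j, hj, hne⟩ := ih m (by omega) hvq
            exact ⟨j, by omega, hne⟩

lemma two_seeds (hτ1 : ∀ u, 1 ≤ τ u) {v : V} (hv : v ∈ Aset T τ) :
    ∀ i, v ∈ Qseq T τ S i → (∃ u ∈ leafNbrs T v, u ∈ Qseq T τ S i) →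
      2 ≤ ∑ j ∈ Finset.range i, (S j ∩ Bset T v).card := by
  intro i
  induction i using Nat.strong_induction_on with
  | _ i ih =>
    match i with
    | 0 => intro h; simp [Qseq] at h
    | i + 1 =>
      intro h ⟨u, hu, huQ⟩
      obtain ⟨u', hu', hu'X⟩ := v_act hv h
      have hvX := leaf_act hτ1 hu huQ
      have hne_vu' : u' ≠ v := by
        have hadj : T.Adj v u' := (SimpleGraph.mem_neighborFinset T v u').mp
          (Finset.mem_filter.mp hu').1
        exact fun he => T.irrefl (he ▸ hadj)
      rcases Finset.mem_union.mp hvX with hvs | hvq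
      · -- v ∈ S i
        rcases Finset.mem_union.mp hu'X with hu's | hu'q
        · -- u' ∈ S i too: two distinct vertices in S i ∩ B v
          have hpair : ({u', v} : Finset V) ⊆ S i ∩ Bset T v := by
            intro x hx
            rcases Finset.mem_insert.mp hx with rfl | hx
            · exact Finset.mem_inter.mpr ⟨hu's, Finset.mem_insert_of_mem hu'⟩
            · rw [Finset.mem_singleton.mp hx]
              exact Finset.mem_inter.mpr ⟨hvs, Finset.mem_insert_self _ _⟩
          have h2 : 2 ≤ (S i ∩ Bset T v).card := by
            have := Finset.card_le_card hpair
            rwa [Finset.card_pair hne_vu'] at this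
          calc 2 ≤ (S i ∩ Bset T v).card := h2
            _ ≤ ∑ j ∈ Finset.range (i + 1), (S j ∩ Bset T v).card :=
              Finset.single_le_sum (f := fun j => (S j ∩ Bset T v).card)
                (fun _ _ => Nat.zero_le _) (Finset.mem_range.mpr (Nat.lt_succ_self i))
        · -- u' ∈ Q i
          match i with
          | 0 => simp [Qseq] at hu'q
          | m + 1 =>
            have hvX' := leaf_act hτ1 hu' hu'q
            rcases Finset.mem_union.mp hvX' with hvs' | hvq'
            · exact two_idx (j1 := m) (j2 := m + 1) (by omega) (by omega)
                (Finset.card_pos.mpr ⟨v, Finset.mem_inter.mpr ⟨hvs',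
                  Finset.mem_insert_self _ _⟩⟩)
                (Finset.card_pos.mpr ⟨v, Finset.mem_inter.mpr ⟨hvs,
                  Finset.mem_insert_self _ _⟩⟩)
            · obtain ⟨j, hj, x, hx⟩ := seed_exists hτ1 hv m hvq'
              exact two_idx (j1 := j) (j2 := m + 1) (by omega) (by omega)
                (Finset.card_pos.mpr ⟨x, hx⟩)
                (Finset.card_pos.mpr ⟨v, Finset.mem_inter.mpr ⟨hvs,
                  Finset.mem_insert_self _ _⟩⟩)
      · -- v ∈ Q i
        rcases Finset.mem_union.mp hu'X with hu's | hu'q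
        · -- u' ∈ S i
          match i with
          | 0 => simp [Qseq] at hvq
          | m + 1 =>
            obtain ⟨j, hj, x, hx⟩ := seed_exists hτ1 hv (m + 1) hvq
            exact two_idx (j1 := j) (j2 := m + 1) (by omega) (by omega)
              (Finset.card_pos.mpr ⟨x, hx⟩)
              (Finset.card_pos.mpr ⟨u', Finset.mem_inter.mpr ⟨hu's,
                Finset.mem_insert_of_mem hu'⟩⟩)
        · -- both in Q i : induction
          have := ih i (Nat.lt_succ_self i) hvq ⟨u', hu', hu'q⟩
          calc 2 ≤ ∑ j ∈ Finset.range i, (S j ∩ Bset T v).card := this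
            _ ≤ ∑ j ∈ Finset.range (i + 1), (S j ∩ Bset T v).card :=
              Finset.sum_le_sum_of_subset (Finset.range_subset_range.mpr (Nat.le_succ i))

lemma Bset_disjoint {v w : V} (hv : v ∈ Aset T τ) (hw : w ∈ Aset T τ) (hne : v ≠ w) :
    Disjoint (Bset T v) (Bset T w) := by
  rcases Finset.mem_filter.mp hv with ⟨-, hdv, -⟩
  rcases Finset.mem_filter.mp hw with ⟨-, hdw, -⟩
  rw [Finset.disjoint_left]
  intro x hxv hxw
  rcases Finset.mem_insert.mp hxv with rfl | hxv
  · rcases Finset.mem_insert.mp hxw with he | hxw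
    · exact hne he
    · have := (Finset.mem_filter.mp hxw).2
      omega
  · rcases Finset.mem_insert.mp hxw with rfl | hxw
    · have := (Finset.mem_filter.mp hxv).2
      omega
    · have h1 := leaf_nbhd hxv
      have h2 := leaf_nbhd hxw
      exact hne (Finset.singleton_injective (h1 ▸ h2 ▸ rfl))

lemma leafNbrs_nonempty {v : V} (hτd : τ v ≤ T.degree v) (hv : v ∈ Aset T τ) :
    (leafNbrs T v).Nonempty := by
  rcases Finset.mem_filter.mp hv with ⟨-, hdv, hlt⟩
  have hpart : (leafNbrs T v).card + lbar T v = T.degree v := by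
    have heq : ((T.neighborFinset v).filter fun u => 1 < T.degree u) =
        (T.neighborFinset v).filter fun u => ¬ T.degree u = 1 := by
      apply Finset.filter_congr
      intro u hu
      have := adj_nbr_deg_pos hu
      omega
    unfold leafNbrs lbar
    rw [heq, Finset.card_filter_add_card_filter_not]
    rfl
  rw [← Finset.card_pos]
  omega

end StmtAux

/-- Corollary 1: For any tree `T` (on at least 2 nodes) with thresholds
`1 ≤ τ(u) ≤ d(u)`, every timed target set has size at least `2|A|`, where
`A = {v : d(v) > 1 and τ(v) > l̄(v)}`. -/
theorem stmt13 [Fintype V] (T : SimpleGraph V) (hT : T.IsTree)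
    (hcard : 2 ≤ Fintype.card V) (τ : V → ℕ)
    (hτ : ∀ u, 1 ≤ τ u ∧ τ u ≤ T.degree u)
    (S : ℕ → Finset V) (k : ℕ) (hS : IsTTS T τ S k) :
    2 * (Aset T τ).card ≤ ttsSize S k := by
  have hτ1 : ∀ u, 1 ≤ τ u := fun u => (hτ u).1
  have hQk : Qseq T τ S k = Finset.univ := hS.2
  have key : ∀ v ∈ Aset T τ, 2 ≤ ∑ j ∈ Finset.range (k + 1), (S j ∩ Bset T v).card := by
    intro v hv
    obtain ⟨u, hu⟩ := leafNbrs_nonempty (hτ v).2 hv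
    have hvQ : v ∈ Qseq T τ S k := hQk ▸ Finset.mem_univ v
    have huQ : u ∈ Qseq T τ S k := hQk ▸ Finset.mem_univ u
    calc 2 ≤ ∑ j ∈ Finset.range k, (S j ∩ Bset T v).card :=
          two_seeds hτ1 hv k hvQ ⟨u, hu, huQ⟩
      _ ≤ ∑ j ∈ Finset.range (k + 1), (S j ∩ Bset T v).card :=
          Finset.sum_le_sum_of_subset (Finset.range_subset_range.mpr (Nat.le_succ k))
  calc 2 * (Aset T τ).card = ∑ _v ∈ Aset T τ, 2 := by
        rw [Finset.sum_const, smul_eq_mul, mul_comm]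
    _ ≤ ∑ v ∈ Aset T τ, ∑ j ∈ Finset.range (k + 1), (S j ∩ Bset T v).card :=
        Finset.sum_le_sum key
    _ = ∑ j ∈ Finset.range (k + 1), ∑ v ∈ Aset T τ, (S j ∩ Bset T v).card :=
        Finset.sum_comm
    _ ≤ ∑ j ∈ Finset.range (k + 1), (S j).card := by
        apply Finset.sum_le_sum
        intro j _
        have hdisj : ∀ v ∈ Aset T τ, ∀ w ∈ Aset T τ, v ≠ w →
            Disjoint (S j ∩ Bset T v) (S j ∩ Bset T w) := fun v hv w hw hne =>
          (Bset_disjoint hv hw hne).mono inf_le_right inf_le_right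
        rw [← Finset.card_biUnion hdisj]
        apply Finset.card_le_card
        intro x hx
        obtain ⟨v, -, hxv⟩ := Finset.mem_biUnion.mp hx
        exact (Finset.mem_inter.mp hxv).1
    _ = ttsSize S k := rfl
end

section
/- The greedy algorithm (Algorithm 1) applied to any pair (G,τ) produces sets S_0, S_1 such that the sequence S_0, S_1, ∅ is a timed target set; i.e., starting with S_0 positive, every node not selected becomes positive in one step, and together with S_1 the entire graph is positive after two steps. -/
open Finset
open scoped Classical

variable {V : Type*}

/-- The state maintained by the greedy algorithm: the sets `S₀`, `S₁` built so far, the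
counters `unselected[u]` of processed unselected neighbors, and the (mutable) threshold
function. -/
structure GreedyState (V : Type*) where
  S0 : Finset V
  S1 : Finset V
  uns : V → ℕ
  thr : V → ℕ

/-- The set of blocked neighbors of `v`: neighbors `u` with
`unselected[u] = d(u) − τ(u)`. -/
noncomputable def blockedSet (G : SimpleGraph V) [Fintype V] (st : GreedyState V)
    (v : V) : Finset V :=
  (G.neighborFinset v).filter fun u => st.uns u = G.degree u - st.thr u

/-- Processing one node `v` in the greedy algorithm (Algorithm 1): if no neighbor is
blocked, `v` is set unselected; if more than one neighbor is blocked, `v` is added to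
`S₀`; if exactly one neighbor `w` is blocked, then if `d(w) > d(v)` the node `v` is set
unselected, `w` is added to `S₁` and `τ(w)` is set to `0`, and otherwise `v` is added
to `S₀`. -/
noncomputable def greedyStep (G : SimpleGraph V) [Fintype V] (st : GreedyState V)
    (v : V) : GreedyState V :=
  let B := blockedSet G st v
  if B.card = 0 then
    { st with uns := fun u => if G.Adj v u then st.uns u + 1 else st.uns u }
  else if 1 < B.card then
    { st with S0 := insert v st.S0 }
  else if ∃ w ∈ B, G.degree v < G.degree w then
    { st with
      S1 := st.S1 ∪ B
      uns := fun u => if G.Adj v u then st.uns u + 1 else st.uns u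
      thr := fun u => if u ∈ B then 0 else st.thr u }
  else
    { st with S0 := insert v st.S0 }

/-- Running the greedy algorithm on the list of nodes `l` (to be taken sorted in ascending
order of degree), starting from empty sets, zero counters and thresholds `τ`. -/
noncomputable def greedyRun (G : SimpleGraph V) [Fintype V] (τ : V → ℕ)
    (l : List V) : GreedyState V :=
  l.foldl (greedyStep G) ⟨∅, ∅, fun _ => 0, τ⟩

/-- The invariant maintained by the greedy algorithm, where `R` is the set of nodes
still to be processed. -/
def GreedyInv (G : SimpleGraph V) [Fintype V] (τ : V → ℕ) (st : GreedyState V)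
    (R : Finset V) : Prop :=
  (∀ v, G.degree v ≤ st.uns v + (G.neighborFinset v ∩ st.S0).card
      + (G.neighborFinset v ∩ R).card) ∧
  (∀ v, st.uns v + st.thr v ≤ G.degree v) ∧
  (∀ v, st.uns v + (G.neighborFinset v ∩ R).card ≤ G.degree v) ∧
  (∀ v, v ∉ st.S1 → st.thr v = τ v) ∧
  (∀ x ∈ st.S0, x ∉ R)

lemma greedyStep_inv (G : SimpleGraph V) [Fintype V] (τ : V → ℕ) (st : GreedyState V)
    (R : Finset V) (v : V) (hv : v ∈ R) (h : GreedyInv G τ st R) :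
    GreedyInv G τ (greedyStep G st v) (R.erase v) := by
  obtain ⟨h1, h2, h3, h4, h5⟩ := h
  have hmemN : ∀ u, G.Adj v u → v ∈ G.neighborFinset u ∩ R := fun u hu =>
    Finset.mem_inter.mpr ⟨(SimpleGraph.mem_neighborFinset _ _ _).mpr hu.symm, hv⟩
  have hEr : ∀ u, G.neighborFinset u ∩ R.erase v = (G.neighborFinset u ∩ R).erase v := by
    intro u; ext x
    simp only [Finset.mem_inter, Finset.mem_erase]
    tauto
  have hcard : ∀ u, G.Adj v u →
      ((G.neighborFinset u ∩ R).erase v).card + 1 = (G.neighborFinset u ∩ R).card := by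
    intro u hu; exact Finset.card_erase_add_one (hmemN u hu)
  have hcard' : ∀ u, ¬ G.Adj v u →
      (G.neighborFinset u ∩ R).erase v = G.neighborFinset u ∩ R := by
    intro u hu
    apply Finset.erase_eq_of_notMem
    intro hx
    exact hu (((SimpleGraph.mem_neighborFinset _ _ _).mp (Finset.mem_inter.mp hx).1).symm)
  have hblocked : ∀ u, u ∈ blockedSet G st v ↔
      G.Adj v u ∧ st.uns u = G.degree u - st.thr u := by
    intro u
    simp [blockedSet, Finset.mem_filter, SimpleGraph.mem_neighborFinset]
  have hnb : ∀ u, G.Adj v u → u ∉ blockedSet G st v →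
      st.uns u ≠ G.degree u - st.thr u := by
    intro u hadj hu hc
    exact hu ((hblocked u).mpr ⟨hadj, hc⟩)
  -- facts about the "bump" update of the counters
  have bump1 : ∀ u, G.degree u ≤ (if G.Adj v u then st.uns u + 1 else st.uns u)
      + (G.neighborFinset u ∩ st.S0).card + (G.neighborFinset u ∩ R.erase v).card := by
    intro u
    rw [hEr u]
    by_cases hadj : G.Adj v u
    · have hc := hcard u hadj
      have := h1 u
      simp only [hadj, if_true]
      omega
    · rw [hcard' u hadj]
      simp only [hadj, if_false]
      exact h1 u
  have bump3 : ∀ u, (if G.Adj v u then st.uns u + 1 else st.uns u)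
      + (G.neighborFinset u ∩ R.erase v).card ≤ G.degree u := by
    intro u
    rw [hEr u]
    by_cases hadj : G.Adj v u
    · have hc := hcard u hadj
      have := h3 u
      simp only [hadj, if_true]
      omega
    · rw [hcard' u hadj]
      simp only [hadj, if_false]
      exact h3 u
  -- the case in which `v` is added to `S0`
  have hS0case : GreedyInv G τ { st with S0 := insert v st.S0 } (R.erase v) := by
    have hvS0 : v ∉ st.S0 := fun hc => h5 v hc hv
    refine ⟨?_, h2, ?_, h4, ?_⟩
    · intro u
      dsimp only
      rw [hEr u]
      by_cases hadj : G.Adj v u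
      · have hvN : v ∈ G.neighborFinset u := (SimpleGraph.mem_neighborFinset _ _ _).mpr hadj.symm
        have hins : G.neighborFinset u ∩ insert v st.S0
            = insert v (G.neighborFinset u ∩ st.S0) := by
          ext x
          simp only [Finset.mem_inter, Finset.mem_insert]
          constructor
          · rintro ⟨hx1, hx2 | hx2⟩
            · exact Or.inl hx2
            · exact Or.inr ⟨hx1, hx2⟩
          · rintro (rfl | ⟨hx1, hx2⟩)
            · exact ⟨hvN, Or.inl rfl⟩
            · exact ⟨hx1, Or.inr hx2⟩
        have hvnot : v ∉ G.neighborFinset u ∩ st.S0 := by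
          intro hc
          exact hvS0 (Finset.mem_inter.mp hc).2
        rw [hins, Finset.card_insert_of_notMem hvnot]
        have hc := hcard u hadj
        have := h1 u
        omega
      · have hins : G.neighborFinset u ∩ insert v st.S0 = G.neighborFinset u ∩ st.S0 := by
          ext x
          simp only [Finset.mem_inter, Finset.mem_insert]
          constructor
          · rintro ⟨hx1, rfl | hx2⟩
            · exact absurd ((SimpleGraph.mem_neighborFinset _ _ _).mp hx1).symm hadj
            · exact ⟨hx1, hx2⟩
          · rintro ⟨hx1, hx2⟩
            exact ⟨hx1, Or.inr hx2⟩
        rw [hins, hcard' u hadj]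
        exact h1 u
    · intro u
      dsimp only
      have hsub : (G.neighborFinset u ∩ R.erase v).card ≤ (G.neighborFinset u ∩ R).card := by
        apply Finset.card_le_card
        rw [hEr u]
        exact Finset.erase_subset _ _
      have := h3 u
      omega
    · intro x hx hx'
      rcases Finset.mem_insert.mp hx with rfl | hx
      · exact (Finset.notMem_erase x R) hx'
      · exact h5 x hx (Finset.mem_of_mem_erase hx')
  by_cases hB0 : (blockedSet G st v).card = 0
  · have hst : greedyStep G st v =
        { st with uns := fun u => if G.Adj v u then st.uns u + 1 else st.uns u } := by
      simp [greedyStep, hB0]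
    rw [hst]
    refine ⟨bump1, ?_, bump3, h4, fun x hx hx' => h5 x hx (Finset.mem_of_mem_erase hx')⟩
    intro u
    by_cases hadj : G.Adj v u
    · have hunb : st.uns u ≠ G.degree u - st.thr u := by
        apply hnb u hadj
        rw [Finset.card_eq_zero.mp hB0]
        exact Finset.notMem_empty u
      have := h2 u
      simp only [hadj, if_true]
      omega
    · simp only [hadj, if_false]
      exact h2 u
  · by_cases hB2 : 1 < (blockedSet G st v).card
    · have hst : greedyStep G st v = { st with S0 := insert v st.S0 } := by
        simp [greedyStep, hB0, hB2]
      rw [hst]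
      exact hS0case
    · by_cases hEx : ∃ w ∈ blockedSet G st v, G.degree v < G.degree w
      · have hst : greedyStep G st v =
            { st with
              S1 := st.S1 ∪ blockedSet G st v
              uns := fun u => if G.Adj v u then st.uns u + 1 else st.uns u
              thr := fun u => if u ∈ blockedSet G st v then 0 else st.thr u } := by
          simp [greedyStep, hB0, hB2, hEx]
        rw [hst]
        refine ⟨bump1, ?_, bump3, ?_, fun x hx hx' => h5 x hx (Finset.mem_of_mem_erase hx')⟩
        · intro u
          by_cases hBu : u ∈ blockedSet G st v
          · have hadj : G.Adj v u := ((hblocked u).mp hBu).1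
            have hm := hmemN u hadj
            have hpos : 1 ≤ (G.neighborFinset u ∩ R).card :=
              Finset.card_pos.mpr ⟨v, hm⟩
            have := h3 u
            simp only [hadj, if_true, hBu]
            omega
          · by_cases hadj : G.Adj v u
            · have hunb := hnb u hadj hBu
              have := h2 u
              simp only [hadj, if_true, hBu, if_false]
              omega
            · simp only [hadj, if_false, hBu]
              exact h2 u
        · intro u hu
          rw [Finset.mem_union] at hu
          push_neg at hu
          simp only [hu.2, if_false]
          exact h4 u hu.1
      · have hst : greedyStep G st v = { st with S0 := insert v st.S0 } := by
          simp [greedyStep, hB0, hB2, hEx]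
        rw [hst]
        exact hS0case

lemma greedyFold_inv (G : SimpleGraph V) [Fintype V] (τ : V → ℕ) :
    ∀ (l : List V) (st : GreedyState V), l.Nodup → GreedyInv G τ st l.toFinset →
      GreedyInv G τ (l.foldl (greedyStep G) st) ∅ := by
  intro l
  induction l with
  | nil => intro st _ h; simpa using h
  | cons v t ih =>
    intro st hnd h
    have hv : v ∈ (v :: t).toFinset := by simp
    have hstep := greedyStep_inv G τ st ((v :: t).toFinset) v hv h
    have hers : ((v :: t).toFinset).erase v = t.toFinset := by
      rw [List.toFinset_cons]
      exact Finset.erase_insert (by simpa using (List.nodup_cons.mp hnd).1)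
    rw [hers] at hstep
    rw [List.foldl_cons]
    exact ih _ (List.nodup_cons.mp hnd).2 hstep

/-- The greedy algorithm (Algorithm 1), run on the nodes of `G` sorted in
ascending order of degree, produces sets `S₀`, `S₁` such that `S₀, S₁, ∅` is a timed
target set for `(G, τ)`: all nodes are positive after two steps. -/
theorem stmt17 [Fintype V] (G : SimpleGraph V) (τ : V → ℕ)
    (hτ : ∀ v, τ v ≤ G.degree v)
    (l : List V) (hnd : l.Nodup) (hall : ∀ v, v ∈ l)
    (hsorted : l.Pairwise fun a b => G.degree a ≤ G.degree b) :
    IsTTS G τ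
      (fun i => if i = 0 then (greedyRun G τ l).S0
        else if i = 1 then (greedyRun G τ l).S1 else ∅) 2 := by
  set st := greedyRun G τ l with hstdef
  set S : ℕ → Finset V := fun i => if i = 0 then st.S0 else if i = 1 then st.S1 else ∅
    with hSdef
  have h0 : GreedyInv G τ ⟨∅, ∅, fun _ => 0, τ⟩ l.toFinset := by
    have hNl : ∀ u, G.neighborFinset u ∩ l.toFinset = G.neighborFinset u :=
      fun u => Finset.inter_eq_left.mpr (fun x _ => List.mem_toFinset.mpr (hall x))
    refine ⟨?_, ?_, ?_, fun u _ => rfl, by simp⟩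
    · intro u
      simp [hNl u, SimpleGraph.card_neighborFinset_eq_degree]
    · intro u
      simpa using hτ u
    · intro u
      simp [hNl u, SimpleGraph.card_neighborFinset_eq_degree]
  have hfin : GreedyInv G τ st ∅ := by
    rw [hstdef]
    exact greedyFold_inv G τ l _ hnd h0
  obtain ⟨h1, h2, _, h4, _⟩ := hfin
  have hmain : ∀ u, u ∉ st.S1 → τ u ≤ (G.neighborFinset u ∩ st.S0).card := by
    intro u hu
    have e1 := h1 u
    have e2 := h2 u
    rw [h4 u hu] at e2
    simp only [Finset.inter_empty, Finset.card_empty, add_zero] at e1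
    omega
  constructor
  · simp [hSdef]
  · apply Finset.eq_univ_iff_forall.mpr
    intro v
    have hQ1 : ∀ u, u ∉ st.S1 → u ∈ Qseq G τ S 1 := by
      intro u hu
      show u ∈ Qseq G τ S (0 + 1)
      rw [Qseq]
      refine Finset.mem_filter.mpr ⟨Finset.mem_univ u, ?_⟩
      have : S 0 ∪ Qseq G τ S 0 = st.S0 := by
        rw [Qseq]
        simp [hSdef]
      rw [this]
      exact hmain u hu
    have hNv : G.neighborFinset v ∩ (S 1 ∪ Qseq G τ S 1) = G.neighborFinset v := by
      apply Finset.inter_eq_left.mpr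
      intro u _
      rw [Finset.mem_union]
      by_cases hu : u ∈ st.S1
      · left
        simpa [hSdef] using hu
      · right
        exact hQ1 u hu
    show v ∈ Qseq G τ S (1 + 1)
    rw [Qseq]
    refine Finset.mem_filter.mpr ⟨Finset.mem_univ v, ?_⟩
    rw [hNv, SimpleGraph.card_neighborFinset_eq_degree]
    exact hτ v
end

section
/- In the tower graph G_κ with strict majority thresholds, the sequence S_0=L_κ∪L'_{κ−1} (where L'_{κ−1}⊆L_{κ−1} has ⌈κ/2⌉ nodes), S_{κ−2}={node of L_1, one of its leaf neighbors}, and S_i=∅ otherwise, is a disjoint timed target set of size κ+⌈κ/2⌉+2; consequently the minimum disjoint timed target set size of G_κ is O(√n). -/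
open Finset
open scoped Classical

variable {V : Type*}

/-- Vertex type of the tower graph: levels `L_1, …, L_κ` with `|L_i| = i`
(a pair `⟨i, j⟩` with `i : Fin κ` encodes the `j`-th node of level `L_{i+1}`),
plus two extra leaf nodes. -/
def towerV (κ : ℕ) : Type := (Σ i : Fin κ, Fin (i + 1)) ⊕ Fin 2

instance (κ : ℕ) : Fintype (towerV κ) := by unfold towerV; infer_instance

/-- The level of a vertex: level nodes of `L_i` have level `i ∈ {1, …, κ}`, and the two
leaves have level `0`. -/
def lev {κ : ℕ} : towerV κ → ℕ
  | Sum.inl x => (x.1 : ℕ) + 1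
  | Sum.inr _ => 0

/-- The tower graph `G_κ`: each node of `L_i` is adjacent to every node of `L_{i+1}`,
and the two leaves (level `0`) are adjacent exactly to the unique node of `L_1`. -/
def towerGraph (κ : ℕ) : SimpleGraph (towerV κ) where
  Adj a b := lev a + 1 = lev b ∨ lev b + 1 = lev a
  symm := ⟨fun a b h => h.symm⟩
  loopless := ⟨by
    intro a h
    rcases h with h | h <;> omega⟩

/-- The set `L_i` of nodes of level `i` (for `i = 0` this is the pair of leaves). -/
noncomputable def levelSet (κ : ℕ) (i : ℕ) : Finset (towerV κ) :=
  Finset.univ.filter fun v => lev v = i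

/-- A disjoint timed target set: a timed target set whose targeted sets
`S_0, …, S_k` are pairwise disjoint. -/
def IsDTTS (G : SimpleGraph V) [Fintype V] (τ : V → ℕ) (S : ℕ → Finset V) (k : ℕ) : Prop :=
  IsTTS G τ S k ∧
    ∀ i ∈ Finset.range (k + 1), ∀ j ∈ Finset.range (k + 1), i ≠ j → Disjoint (S i) (S j)

/-- Minimum size of a disjoint timed target set. -/
noncomputable def MDTT (G : SimpleGraph V) [Fintype V] (τ : V → ℕ) : ℕ :=
  sInf {m | ∃ (S : ℕ → Finset V) (k : ℕ), IsDTTS G τ S k ∧ ttsSize S k = m}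

/-- Minimum size of an ordinary target set in the non-progressive model. -/
noncomputable def MT (G : SimpleGraph V) [Fintype V] (τ : V → ℕ) : ℕ :=
  sInf {m | ∃ S : Finset V, IsTS G τ S ∧ S.card = m}

/-- The timed sequence used in Theorem 1: `S_0 = L_κ ∪ L'` (where `L' ⊆ L_{κ−1}`),
`S_{κ−2} = {x, y}` (the node of `L_1` and one of its leaf neighbors), and `S_i = ∅`
otherwise. -/
noncomputable def towerSeq (κ : ℕ) (L' : Finset (towerV κ)) (x y : towerV κ) :
    ℕ → Finset (towerV κ) :=
  fun i => if i = 0 then levelSet κ κ ∪ L' else if i = κ - 2 then {x, y} else ∅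

lemma lev_le {κ : ℕ} (v : towerV κ) : lev v ≤ κ := by
  cases v with
  | inl a => have := a.1.isLt; simp only [lev]; omega
  | inr b => simp [lev]

lemma mem_levelSet {κ i : ℕ} {v : towerV κ} : v ∈ levelSet κ i ↔ lev v = i := by
  simp [levelSet]

lemma card_levelSet (κ i : ℕ) :
    (levelSet κ i).card = if i = 0 then 2 else if i ≤ κ then i else 0 := by
  rw [levelSet, Finset.card_filter]
  have h : ∑ v : towerV κ, (if lev v = i then 1 else 0)
      = (∑ x : Σ j : Fin κ, Fin (j + 1), if lev (Sum.inl x : towerV κ) = i then 1 else 0)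
        + ∑ b : Fin 2, if lev (Sum.inr b : towerV κ) = i then 1 else 0 :=
    Fintype.sum_sum_type _
  rw [h]
  have h2 : (∑ b : Fin 2, if lev (Sum.inr b : towerV κ) = i then 1 else 0)
      = if i = 0 then 2 else 0 := by
    by_cases h0 : i = 0
    · subst h0; simp [lev]
    · rw [if_neg h0]
      show (∑ b : Fin 2, if (0:ℕ) = i then 1 else 0) = 0
      rw [Finset.sum_eq_zero]
      intro b _
      rw [if_neg (by omega)]
  have h3 : (∑ x : Σ j : Fin κ, Fin (j + 1), if lev (Sum.inl x : towerV κ) = i then 1 else 0)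
      = if i = 0 then 0 else if i ≤ κ then i else 0 := by
    rw [← Finset.univ_sigma_univ, Finset.sum_sigma]
    have hc : ∀ j : Fin κ, (∑ b : Fin ((j:ℕ) + 1), if lev (Sum.inl ⟨j, b⟩ : towerV κ) = i then 1 else 0)
        = if (j : ℕ) + 1 = i then (j : ℕ) + 1 else 0 := by
      intro j
      show (∑ b : Fin ((j:ℕ) + 1), if (j:ℕ) + 1 = i then 1 else 0) = _
      split_ifs with hj
      · simp
      · simp
    simp only [hc]
    rw [Fin.sum_univ_eq_sum_range (fun j => if j + 1 = i then j + 1 else 0) κ]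
    rcases Nat.eq_zero_or_pos i with rfl | hi
    · simp
    · obtain ⟨m, rfl⟩ : ∃ m, i = m + 1 := ⟨i - 1, by omega⟩
      have he : ∀ j ∈ Finset.range κ, (if j + 1 = m + 1 then j + 1 else 0)
          = if j = m then j + 1 else 0 := by
        intro j _; split_ifs <;> omega
      rw [Finset.sum_congr rfl he, Finset.sum_ite_eq' (Finset.range κ) m (fun j => j + 1)]
      rw [if_neg (by omega : ¬ (m + 1 = 0))]
      by_cases hm : m < κ
      · rw [if_pos (Finset.mem_range.mpr hm), if_pos (by omega)]
      · rw [if_neg (fun hcc => hm (Finset.mem_range.mp hcc)), if_neg (by omega)]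
  rw [h2, h3]
  split_ifs <;> first | omega | (exfalso; assumption)

lemma lev_inl {κ : ℕ} (a : Σ i : Fin κ, Fin (i + 1)) :
    lev (Sum.inl a : towerV κ) = (a.1 : ℕ) + 1 := rfl

lemma lev_inr {κ : ℕ} (b : Fin 2) : lev (Sum.inr b : towerV κ) = 0 := rfl

attribute [irreducible] lev

lemma mem_nbr {κ : ℕ} {v w : towerV κ} :
    w ∈ (towerGraph κ).neighborFinset v ↔ lev v + 1 = lev w ∨ lev w + 1 = lev v := by
  rw [SimpleGraph.mem_neighborFinset]
  exact Iff.rfl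

noncomputable def upSet (κ m : ℕ) : Finset (towerV κ) :=
  Finset.univ.filter fun v => m ≤ lev v

lemma mem_upSet {κ m : ℕ} {v : towerV κ} : v ∈ upSet κ m ↔ m ≤ lev v := by
  simp [upSet]

lemma card_nbr_inter {κ : ℕ} (v : towerV κ) (p : ℕ → Prop) (A : Finset (towerV κ))
    (hA : ∀ w, w ∈ A ↔ p (lev w)) :
    ((towerGraph κ).neighborFinset v ∩ A).card
      = (if p (lev v + 1) then (levelSet κ (lev v + 1)).card else 0)
        + (if 1 ≤ lev v ∧ p (lev v - 1) then (levelSet κ (lev v - 1)).card else 0) := by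
  have h1 : (towerGraph κ).neighborFinset v ∩ A
      = (A.filter fun w => lev w = lev v + 1)
        ∪ (A.filter fun w => 1 ≤ lev v ∧ lev w = lev v - 1) := by
    ext w
    simp only [Finset.mem_inter, Finset.mem_union, Finset.mem_filter, mem_nbr]
    constructor
    · rintro ⟨hadj, hw⟩
      rcases hadj with h | h
      · exact Or.inl ⟨hw, by omega⟩
      · exact Or.inr ⟨hw, by omega, by omega⟩
    · rintro (⟨hw, h⟩ | ⟨hw, hh1, hh2⟩)
      · exact ⟨Or.inl (by omega), hw⟩
      · exact ⟨Or.inr (by omega), hw⟩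
  rw [h1, Finset.card_union_of_disjoint]
  · congr 1
    · by_cases hp : p (lev v + 1)
      · rw [if_pos hp]
        congr 1
        ext w
        rw [Finset.mem_filter, mem_levelSet, hA]
        constructor
        · rintro ⟨-, h⟩; exact h
        · intro h; exact ⟨by rw [h]; exact hp, h⟩
      · rw [if_neg hp, Finset.card_eq_zero, Finset.filter_eq_empty_iff]
        intro w hw hlev
        exact hp (hlev ▸ (hA w).mp hw)
    · by_cases hp : 1 ≤ lev v ∧ p (lev v - 1)
      · rw [if_pos hp]
        congr 1
        ext w
        rw [Finset.mem_filter, mem_levelSet, hA]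
        constructor
        · rintro ⟨-, -, h⟩; exact h
        · intro h; exact ⟨by rw [h]; exact hp.2, hp.1, h⟩
      · rw [if_neg hp, Finset.card_eq_zero, Finset.filter_eq_empty_iff]
        rintro w hw ⟨hh1, hh2⟩
        exact hp ⟨hh1, by rw [← hh2]; exact (hA w).mp hw⟩
  · rw [Finset.disjoint_left]
    intro a ha hb
    rw [Finset.mem_filter] at ha hb
    obtain ⟨-, ha⟩ := ha
    obtain ⟨-, hb1, hb2⟩ := hb
    omega

lemma degree_eq {κ : ℕ} (v : towerV κ) :
    (towerGraph κ).degree v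
      = (levelSet κ (lev v + 1)).card
        + if 1 ≤ lev v then (levelSet κ (lev v - 1)).card else 0 := by
  have h := card_nbr_inter v (fun _ => True) Finset.univ (by simp)
  simp only [if_true, and_true] at h
  rw [Finset.inter_univ] at h
  exact h

lemma tau_eq {κ : ℕ} (hκ : 4 ≤ κ) (v : towerV κ) :
    strictMaj (towerGraph κ) v
      = if lev v = 0 then 1 else if lev v = 1 then 3
        else if lev v = κ then (κ + 1) / 2 else lev v + 1 := by
  have hvle := lev_le v
  rw [strictMaj, degree_eq, card_levelSet, card_levelSet]
  split_ifs <;> first | omega | (exfalso; assumption)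

lemma Qseq_succ {κ : ℕ} (G : SimpleGraph (towerV κ)) (τ : towerV κ → ℕ)
    (S : ℕ → Finset (towerV κ)) (i : ℕ) :
    Qseq G τ S (i + 1) = Finset.univ.filter fun v =>
      τ v ≤ (G.neighborFinset v ∩ (S i ∪ Qseq G τ S i)).card := rfl

lemma Qseq_zero {κ : ℕ} (G : SimpleGraph (towerV κ)) (τ : towerV κ → ℕ)
    (S : ℕ → Finset (towerV κ)) : Qseq G τ S 0 = ∅ := rfl

lemma Qseq_step_up {κ : ℕ} (hκ : 4 ≤ κ) (S : ℕ → Finset (towerV κ)) (i m : ℕ)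
    (hm1 : 3 ≤ m) (hm2 : m ≤ κ - 1) (hS : S i = ∅)
    (hQ : Qseq (towerGraph κ) (strictMaj (towerGraph κ)) S i = upSet κ m) :
    Qseq (towerGraph κ) (strictMaj (towerGraph κ)) S (i + 1) = upSet κ (m - 1) := by
  ext v
  have hvle := lev_le v
  have htau := tau_eq hκ v
  rw [Qseq_succ, hQ, hS, Finset.empty_union]
  simp only [Finset.mem_filter, Finset.mem_univ, true_and, mem_upSet]
  rw [card_nbr_inter v (fun n => m ≤ n) (upSet κ m) (fun w => mem_upSet),
    htau, card_levelSet, card_levelSet]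
  split_ifs <;> first | omega | (exfalso; assumption)

lemma Q1_eq {κ : ℕ} (hκ : 4 ≤ κ) (L' : Finset (towerV κ)) (hL'sub : L' ⊆ levelSet κ (κ - 1))
    (hL'card : L'.card = (κ + 1) / 2) (x y : towerV κ) :
    Qseq (towerGraph κ) (strictMaj (towerGraph κ)) (towerSeq κ L' x y) 1 = upSet κ (κ - 1) := by
  have hS0 : towerSeq κ L' x y 0 = levelSet κ κ ∪ L' := by simp [towerSeq]
  ext v
  have hvle := lev_le v
  have htau := tau_eq hκ v
  have h1eq : (1 : ℕ) = 0 + 1 := rfl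
  rw [h1eq, Qseq_succ, hS0, Qseq_zero, Finset.union_empty]
  simp only [Finset.mem_filter, Finset.mem_univ, true_and, mem_upSet]
  by_cases h1 : lev v = κ - 1
  · have hsub : levelSet κ κ ⊆ (towerGraph κ).neighborFinset v ∩ (levelSet κ κ ∪ L') := by
      intro w hw
      have hw' := mem_levelSet.mp hw
      exact Finset.mem_inter.mpr ⟨mem_nbr.mpr (Or.inl (by omega)), Finset.mem_union_left _ hw⟩
    have hcard := Finset.card_le_card hsub
    rw [card_levelSet] at hcard
    rw [htau]
    split_ifs at hcard ⊢ <;> first | omega | (exfalso; assumption)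
  by_cases h2 : lev v = κ
  · have hsub : L' ⊆ (towerGraph κ).neighborFinset v ∩ (levelSet κ κ ∪ L') := by
      intro w hw
      have hw' := mem_levelSet.mp (hL'sub hw)
      exact Finset.mem_inter.mpr ⟨mem_nbr.mpr (Or.inr (by omega)), Finset.mem_union_right _ hw⟩
    have hcard := Finset.card_le_card hsub
    rw [hL'card] at hcard
    rw [htau]
    split_ifs <;> first | omega | (exfalso; assumption)
  by_cases h3 : lev v = κ - 2
  · have hsub : (towerGraph κ).neighborFinset v ∩ (levelSet κ κ ∪ L') ⊆ L' := by
      intro w hw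
      rw [Finset.mem_inter, mem_nbr, Finset.mem_union] at hw
      obtain ⟨hadj, hm | hm⟩ := hw
      · have := mem_levelSet.mp hm; omega
      · exact hm
    have hcard := Finset.card_le_card hsub
    rw [hL'card] at hcard
    rw [htau]
    split_ifs <;> first | omega | (exfalso; assumption)
  · have hempty : (towerGraph κ).neighborFinset v ∩ (levelSet κ κ ∪ L') = ∅ := by
      rw [Finset.eq_empty_iff_forall_notMem]
      intro w hw
      rw [Finset.mem_inter, mem_nbr, Finset.mem_union] at hw
      obtain ⟨hadj, hm | hm⟩ := hw
      · have := mem_levelSet.mp hm; omega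
      · have := mem_levelSet.mp (hL'sub hm); omega
    rw [hempty]
    simp only [Finset.card_empty]
    rw [htau]
    split_ifs <;> first | omega | (exfalso; assumption)

lemma Qfinal {κ : ℕ} (hκ : 4 ≤ κ) (S : ℕ → Finset (towerV κ)) (i : ℕ)
    (x y : towerV κ) (hx : x ∈ levelSet κ 1) (hy : y ∈ levelSet κ 0)
    (hS : S i = {x, y}) (hQ : Qseq (towerGraph κ) (strictMaj (towerGraph κ)) S i = upSet κ 2) :
    Qseq (towerGraph κ) (strictMaj (towerGraph κ)) S (i + 1) = Finset.univ := by
  ext v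
  have hvle := lev_le v
  have htau := tau_eq hκ v
  have hx1 : lev x = 1 := mem_levelSet.mp hx
  have hy0 : lev y = 0 := mem_levelSet.mp hy
  rw [Qseq_succ, hS, hQ]
  simp only [Finset.mem_filter, Finset.mem_univ, true_and, iff_true]
  by_cases h0 : lev v = 0
  · have hxin : x ∈ (towerGraph κ).neighborFinset v ∩ ({x, y} ∪ upSet κ 2) :=
      Finset.mem_inter.mpr ⟨mem_nbr.mpr (Or.inl (by omega)),
        Finset.mem_union_left _ (by simp)⟩
    have hcard : 1 ≤ ((towerGraph κ).neighborFinset v ∩ ({x, y} ∪ upSet κ 2)).card :=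
      Finset.card_pos.mpr ⟨x, hxin⟩
    rw [htau]
    split_ifs <;> first | omega | (exfalso; assumption)
  by_cases h1 : lev v = 1
  · have hsub : insert y (levelSet κ 2) ⊆ (towerGraph κ).neighborFinset v ∩ ({x, y} ∪ upSet κ 2) := by
      intro w hw
      rcases Finset.mem_insert.mp hw with rfl | hw2
      · exact Finset.mem_inter.mpr ⟨mem_nbr.mpr (Or.inr (by omega)),
          Finset.mem_union_left _ (by simp)⟩
      · have h2 := mem_levelSet.mp hw2
        exact Finset.mem_inter.mpr ⟨mem_nbr.mpr (Or.inl (by omega)),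
          Finset.mem_union_right _ (mem_upSet.mpr (by omega))⟩
    have hcard := Finset.card_le_card hsub
    have hymem : y ∉ levelSet κ 2 := fun hmem => by
      have := mem_levelSet.mp hmem; omega
    rw [Finset.card_insert_of_notMem hymem, card_levelSet] at hcard
    rw [htau]
    split_ifs at hcard ⊢ <;> first | omega | (exfalso; assumption)
  by_cases hk : lev v = κ
  · have hsub : levelSet κ (κ - 1) ⊆ (towerGraph κ).neighborFinset v ∩ ({x, y} ∪ upSet κ 2) := by
      intro w hw
      have h2 := mem_levelSet.mp hw
      exact Finset.mem_inter.mpr ⟨mem_nbr.mpr (Or.inr (by omega)),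
        Finset.mem_union_right _ (mem_upSet.mpr (by omega))⟩
    have hcard := Finset.card_le_card hsub
    rw [card_levelSet] at hcard
    rw [htau]
    split_ifs at hcard ⊢ <;> first | omega | (exfalso; assumption)
  · have hsub : levelSet κ (lev v + 1) ⊆ (towerGraph κ).neighborFinset v ∩ ({x, y} ∪ upSet κ 2) := by
      intro w hw
      have h2 := mem_levelSet.mp hw
      exact Finset.mem_inter.mpr ⟨mem_nbr.mpr (Or.inl (by omega)),
        Finset.mem_union_right _ (mem_upSet.mpr (by omega))⟩
    have hcard := Finset.card_le_card hsub
    rw [card_levelSet] at hcard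
    rw [htau]
    split_ifs at hcard ⊢ <;> first | omega | (exfalso; assumption)

lemma tower_main (κ : ℕ) (hκ : 4 ≤ κ)
    (L' : Finset (towerV κ)) (hL'sub : L' ⊆ levelSet κ (κ - 1))
    (hL'card : L'.card = (κ + 1) / 2)
    (x y : towerV κ) (hx : x ∈ levelSet κ 1) (hy : y ∈ levelSet κ 0) :
    IsDTTS (towerGraph κ) (strictMaj (towerGraph κ)) (towerSeq κ L' x y) (κ - 1)
      ∧ ttsSize (towerSeq κ L' x y) (κ - 1) = κ + (κ + 1) / 2 + 2 := by
  have hx1 : lev x = 1 := mem_levelSet.mp hx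
  have hy0 : lev y = 0 := mem_levelSet.mp hy
  have hchain : ∀ t, 1 ≤ t → t ≤ κ - 2 →
      Qseq (towerGraph κ) (strictMaj (towerGraph κ)) (towerSeq κ L' x y) t
        = upSet κ (κ - t) := by
    intro t
    induction t with
    | zero => intro h; omega
    | succ n ih =>
      intro h1 h2
      rcases Nat.eq_zero_or_pos n with rfl | hn
      · exact Q1_eq hκ L' hL'sub hL'card x y
      · have hQn := ih hn (by omega)
        have hSn : towerSeq κ L' x y n = ∅ := by
          simp only [towerSeq]
          rw [if_neg (by omega), if_neg (by omega)]
        have hstep := Qseq_step_up hκ (towerSeq κ L' x y) n (κ - n)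
          (by omega) (by omega) hSn hQn
        rw [show κ - n - 1 = κ - (n + 1) by omega] at hstep
        exact hstep
  have hQk2 : Qseq (towerGraph κ) (strictMaj (towerGraph κ)) (towerSeq κ L' x y) (κ - 2)
      = upSet κ 2 := by
    have h := hchain (κ - 2) (by omega) le_rfl
    rw [show κ - (κ - 2) = 2 by omega] at h
    exact h
  have hSk2 : towerSeq κ L' x y (κ - 2) = {x, y} := by
    simp only [towerSeq]
    rw [if_neg (by omega)]
    exact if_pos trivial
  have hQfin : Qseq (towerGraph κ) (strictMaj (towerGraph κ)) (towerSeq κ L' x y) (κ - 1)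
      = Finset.univ := by
    have h := Qfinal hκ (towerSeq κ L' x y) (κ - 2) x y hx hy hSk2 hQk2
    rw [show κ - 2 + 1 = κ - 1 by omega] at h
    exact h
  have hSfin : towerSeq κ L' x y (κ - 1) = ∅ := by
    simp only [towerSeq]
    rw [if_neg (by omega), if_neg (by omega)]
  have hAcard : (levelSet κ κ ∪ L').card = κ + (κ + 1) / 2 := by
    rw [Finset.card_union_of_disjoint, card_levelSet, hL'card]
    · rw [if_neg (by omega), if_pos le_rfl]
    · rw [Finset.disjoint_left]
      intro a ha hb
      have h1 : lev a = κ := mem_levelSet.mp ha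
      have h2 : lev a = κ - 1 := mem_levelSet.mp (hL'sub hb)
      omega
  have hxy : ({x, y} : Finset (towerV κ)).card = 2 := by
    rw [Finset.card_pair]
    intro h
    rw [h] at hx1
    omega
  refine ⟨⟨⟨hSfin, hQfin⟩, ?_⟩, ?_⟩
  · -- disjointness
    intro i _ j _ hij
    have hd : Disjoint (levelSet κ κ ∪ L') ({x, y} : Finset (towerV κ)) := by
      rw [Finset.disjoint_left]
      intro a ha hmem
      have h1 : lev a = κ ∨ lev a = κ - 1 := by
        rcases Finset.mem_union.mp ha with h | h
        · exact Or.inl (mem_levelSet.mp h)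
        · exact Or.inr (mem_levelSet.mp (hL'sub h))
      rcases Finset.mem_insert.mp hmem with rfl | h
      · omega
      · rw [Finset.mem_singleton] at h
        subst h
        omega
    simp only [towerSeq]
    split_ifs <;> first
      | omega
      | exact hd
      | exact hd.symm
      | exact Finset.disjoint_empty_left _
      | exact Finset.disjoint_empty_right _
  · -- size
    rw [ttsSize, show κ - 1 + 1 = κ by omega]
    have hterm : ∀ i ∈ Finset.range κ, (towerSeq κ L' x y i).card
        = (if i = 0 then κ + (κ + 1) / 2 else 0) + (if i = κ - 2 then 2 else 0) := by
      intro i _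
      simp only [towerSeq]
      split_ifs <;> (try simp only [Finset.card_empty, hAcard, hxy]) <;> omega
    rw [Finset.sum_congr rfl hterm, Finset.sum_add_distrib,
      Finset.sum_ite_eq' (Finset.range κ) 0 (fun _ => κ + (κ + 1) / 2),
      Finset.sum_ite_eq' (Finset.range κ) (κ - 2) (fun _ => 2),
      if_pos (Finset.mem_range.mpr (by omega)), if_pos (Finset.mem_range.mpr (by omega))]

lemma card_towerV_bound (κ : ℕ) : κ ^ 2 ≤ 2 * Fintype.card (towerV κ) := by
  have h : Fintype.card (towerV κ) = (∑ j : Fin κ, ((j : ℕ) + 1)) + 2 := by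
    rw [show Fintype.card (towerV κ)
        = Fintype.card ((Σ i : Fin κ, Fin (i + 1)) ⊕ Fin 2) from rfl]
    rw [Fintype.card_sum, Fintype.card_sigma]
    simp
  rw [h, Fin.sum_univ_eq_sum_range (fun j => j + 1) κ]
  have key : ∀ n : ℕ, 2 * ∑ j ∈ Finset.range n, (j + 1) = n * (n + 1) := by
    intro n
    induction n with
    | zero => simp
    | succ k ih => rw [Finset.sum_range_succ, Nat.mul_add, ih]; ring
  have hk := key κ
  nlinarith [sq_nonneg κ]

/-- In the tower graph `G_κ` (`κ ≥ 4`) with strict majority thresholds, for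
any `L' ⊆ L_{κ−1}` with `|L'| = ⌈κ/2⌉`, taking `S_0 = L_κ ∪ L'`, `S_{κ−2} = {x, y}` with
`x` the node of `L_1` and `y` one of its leaf neighbors, and `S_i = ∅` otherwise, yields a
disjoint timed target set (with `k = κ − 1`) of size `κ + ⌈κ/2⌉ + 2`; consequently the
minimum disjoint timed target set size of `G_κ` is `O(√n)`. -/
theorem stmt18 (κ : ℕ) (hκ : 4 ≤ κ)
    (L' : Finset (towerV κ)) (hL'sub : L' ⊆ levelSet κ (κ - 1))
    (hL'card : L'.card = (κ + 1) / 2)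
    (x y : towerV κ) (hx : x ∈ levelSet κ 1) (hy : y ∈ levelSet κ 0) :
    (IsDTTS (towerGraph κ) (strictMaj (towerGraph κ)) (towerSeq κ L' x y) (κ - 1)
      ∧ ttsSize (towerSeq κ L' x y) (κ - 1) = κ + (κ + 1) / 2 + 2)
    ∧ ∃ c : ℝ, ∀ κ' : ℕ, 4 ≤ κ' →
        (MDTT (towerGraph κ') (strictMaj (towerGraph κ')) : ℝ)
          ≤ c * Real.sqrt (Fintype.card (towerV κ')) := by
  refine ⟨tower_main κ hκ L' hL'sub hL'card x y hx hy, ⟨2 * Real.sqrt 2, ?_⟩⟩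
  intro κ' hκ'
  obtain ⟨L'', hL''sub, hL''card⟩ : ∃ L'' ⊆ levelSet κ' (κ' - 1), L''.card = (κ' + 1) / 2 := by
    apply Finset.exists_subset_card_eq
    rw [card_levelSet, if_neg (by omega), if_pos (by omega)]
    omega
  have hx' : (Sum.inl ⟨⟨0, by omega⟩, ⟨0, Nat.succ_pos 0⟩⟩ : towerV κ') ∈ levelSet κ' 1 := by
    exact mem_levelSet.mpr (lev_inl _)
  have hy' : (Sum.inr 0 : towerV κ') ∈ levelSet κ' 0 := by
    exact mem_levelSet.mpr (lev_inr _)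
  have hmain := tower_main κ' hκ' L'' hL''sub hL''card _ _ hx' hy'
  have hMDTT : MDTT (towerGraph κ') (strictMaj (towerGraph κ')) ≤ κ' + (κ' + 1) / 2 + 2 :=
    Nat.sInf_le ⟨_, κ' - 1, hmain.1, hmain.2⟩
  have hb : MDTT (towerGraph κ') (strictMaj (towerGraph κ')) ≤ 2 * κ' := by omega
  have hn := card_towerV_bound κ'
  have hnR : ((κ' : ℝ)) ^ 2 ≤ 2 * (Fintype.card (towerV κ') : ℝ) := by exact_mod_cast hn
  have hsq : (κ' : ℝ) ≤ Real.sqrt 2 * Real.sqrt (Fintype.card (towerV κ')) := by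
    rw [← Real.sqrt_mul (by norm_num : (0:ℝ) ≤ 2)]
    calc (κ' : ℝ) = Real.sqrt ((κ' : ℝ) ^ 2) := (Real.sqrt_sq (Nat.cast_nonneg κ')).symm
      _ ≤ Real.sqrt (2 * (Fintype.card (towerV κ') : ℝ)) := Real.sqrt_le_sqrt hnR
  have hbR : (MDTT (towerGraph κ') (strictMaj (towerGraph κ')) : ℝ) ≤ 2 * (κ' : ℝ) := by
    exact_mod_cast hb
  calc (MDTT (towerGraph κ') (strictMaj (towerGraph κ')) : ℝ)
      ≤ 2 * (κ' : ℝ) := hbR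
    _ ≤ 2 * (Real.sqrt 2 * Real.sqrt (Fintype.card (towerV κ'))) := by linarith
    _ = 2 * Real.sqrt 2 * Real.sqrt (Fintype.card (towerV κ')) := by ring
end
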